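/- arXiv:1604.01299 — 2 statements merged into one kernel-verified Lean document; each statement's English description precedes it below -/
import Mathlib

section
/- Let $(\Omega, \phi)$ be a finite probability space of configurations $\omega \in \{0,1\}^E$ for a finite edge set $E$, and let $\mu$ be the uniform measure on a finite set $\mathcal{O}$ of orderings; let $\nu = \phi \otimes \mu$. Suppose $\mathcal{E}, \mathcal{F} \subseteq \{0,1\}^E \times \mathcal{O}$ and $\Psi : \mathcal{E} \to 2^{\mathcal{F}}$ satisfy: (1) if $(\omega',\preceq') \in \Psi(\omega,\preceq)$ then $\preceq' = \preceq$; (2) there is $t > 0$ with $|\Psi(\omega,\preceq)| \geq t$ for all $(\omega,\preceq) \in \mathcal{E}$; (3) there is $s \in \mathbb{N}$ such that for each $(\omega',\preceq) \in \mathcal{F}$ there is a set $S(\omega',\preceq)$ of at most $s$ edges such that every $\omega$ with $(\omega',\preceq) \in \Psi(\omega,\preceq)$ differs from $\omega'$ only on $S(\omega',\preceq)$; (4) for any two configurations $\omega, \omega'$ differing on at most $s$ edges, $\phi(\omega) \leq C^s \phi(\omega')$ where $C = q/\min\{p, 1-p\}$ for fixed $p \in (0,1)$, $q \geq 1$. Then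 $\nu(\mathcal{E}) \leq \frac{1}{t} (2C)^s \nu(\mathcal{F})$. -/
open Finset

/-- Multi-valued map principle (Lemma 3.2): with `ν = φ ⊗ (uniform on 𝒪)`,
events `𝓔, 𝓕 ⊆ {0,1}^E × 𝒪` and `Ψ : 𝓔 → 2^𝓕` satisfying
(1) `Ψ` preserves the ordering coordinate, (2) `|Ψ(ω,≼)| ≥ t > 0`,
(3) preimage configurations differ from `ω'` only on a set `S(ω',≼)` of at most
`s` edges, and (4) the finite-energy comparison `φ(ω) ≤ C^s φ(ω')` for
configurations differing on at most `s` edges, with `C = q / min p (1-p)`,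
one has `ν(𝓔) ≤ (1/t) (2C)^s ν(𝓕)`. -/
theorem stmt_0 {E 𝒪 : Type*} [Fintype E] [DecidableEq E] [Fintype 𝒪] [Nonempty 𝒪]
    (p q : ℝ) (hp0 : 0 < p) (hp1 : p < 1) (hq : 1 ≤ q)
    (φ : (E → Bool) → ℝ) (hφ0 : ∀ ω, 0 ≤ φ ω) (hφ1 : ∑ ω : E → Bool, φ ω = 1)
    (ν : ((E → Bool) × 𝒪) → ℝ)
    (hν : ∀ x, ν x = φ x.1 / (Fintype.card 𝒪 : ℝ))
    (𝓔 𝓕 : Finset ((E → Bool) × 𝒪))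
    (Ψ : ((E → Bool) × 𝒪) → Finset ((E → Bool) × 𝒪))
    (hΨ𝓕 : ∀ x ∈ 𝓔, Ψ x ⊆ 𝓕)
    -- (1) the ordering is preserved
    (h1 : ∀ x ∈ 𝓔, ∀ y ∈ Ψ x, y.2 = x.2)
    -- (2) each image has at least t elements
    (t : ℝ) (ht : 0 < t) (h2 : ∀ x ∈ 𝓔, t ≤ ((Ψ x).card : ℝ))
    -- (3) preimages differ from ω' only on a set S(ω',≼) of ≤ s edges
    (s : ℕ) (S : ((E → Bool) × 𝒪) → Finset E)
    (h3 : ∀ y ∈ 𝓕, (S y).card ≤ s ∧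
      ∀ x ∈ 𝓔, y ∈ Ψ x → ∀ e, e ∉ S y → x.1 e = y.1 e)
    -- (4) finite-energy comparison
    (h4 : ∀ ω ω' : E → Bool,
      (univ.filter (fun e => ω e ≠ ω' e)).card ≤ s →
      φ ω ≤ (q / min p (1 - p)) ^ s * φ ω') :
    ∑ x ∈ 𝓔, ν x ≤ (1 / t) * (2 * (q / min p (1 - p))) ^ s * ∑ y ∈ 𝓕, ν y := by

  classical
  set C := q / min p (1 - p) with hC
  have hm : (0:ℝ) < min p (1 - p) := lt_min hp0 (by linarith)
  have hC1 : (1:ℝ) ≤ C := by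
    rw [hC, le_div_iff₀ hm]
    have h1' := min_le_left p (1-p)
    nlinarith
  have hC0 : (0:ℝ) ≤ C := le_trans zero_le_one hC1
  have hcard𝒪 : (0:ℝ) < (Fintype.card 𝒪 : ℝ) := by exact_mod_cast Fintype.card_pos
  have hν0 : ∀ x, 0 ≤ ν x := by
    intro x; rw [hν]; exact div_nonneg (hφ0 _) (le_of_lt hcard𝒪)
  -- per-y bound
  have key : ∀ y ∈ 𝓕, ∑ x ∈ 𝓔.filter (fun x => y ∈ Ψ x), ν x ≤ (2*C)^s * ν y := by
    intro y hy
    obtain ⟨hSy, hdiff⟩ := h3 y hy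
    set P := 𝓔.filter (fun x => y ∈ Ψ x) with hP
    have hmem : ∀ x ∈ P, x ∈ 𝓔 ∧ y ∈ Ψ x := by
      intro x hx; simpa [hP] using hx
    -- each term bound
    have hterm : ∀ x ∈ P, ν x ≤ C^s * ν y := by
      intro x hx
      obtain ⟨hxE, hxΨ⟩ := hmem x hx
      have hsub : (univ.filter (fun e => x.1 e ≠ y.1 e)) ⊆ S y := by
        intro e he
        simp only [mem_filter] at he
        by_contra hn
        exact he.2 (hdiff x hxE hxΨ e hn)
      have hcard : (univ.filter (fun e => x.1 e ≠ y.1 e)).card ≤ s :=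
        le_trans (Finset.card_le_card hsub) hSy
      have hle := h4 x.1 y.1 hcard
      rw [hν x, hν y, ← mul_div_assoc]
      exact div_le_div_of_nonneg_right hle hcard𝒪.le
    -- card bound via injection into functions S y → Bool
    have hcardP : P.card ≤ 2 ^ s := by
      have hinj : Set.InjOn (fun x : ((E → Bool) × 𝒪) => fun e : {e // e ∈ S y} => x.1 e.1)
          P := by
        intro a ha b hb hab
        obtain ⟨haE, haΨ⟩ := hmem a ha
        obtain ⟨hbE, hbΨ⟩ := hmem b hb
        have h2' : a.2 = b.2 := (h1 a haE y haΨ).symm.trans (h1 b hbE y hbΨ)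
        have h1' : a.1 = b.1 := by
          funext e
          by_cases he : e ∈ S y
          · exact congrFun hab ⟨e, he⟩
          · rw [hdiff a haE haΨ e he, hdiff b hbE hbΨ e he]
        exact Prod.ext h1' h2'
      have hcle := Finset.card_le_card_of_injOn
        (fun x : ((E → Bool) × 𝒪) => fun e : {e // e ∈ S y} => x.1 e.1)
        (fun x _ => Finset.mem_univ _) hinj
      calc P.card ≤ (Finset.univ : Finset ({e // e ∈ S y} → Bool)).card := hcle
        _ = 2 ^ (S y).card := by
            rw [Finset.card_univ, Fintype.card_fun, Fintype.card_bool, Fintype.card_coe]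
        _ ≤ 2 ^ s := Nat.pow_le_pow_right (by norm_num) hSy
    calc ∑ x ∈ P, ν x ≤ P.card • (C^s * ν y) :=
          Finset.sum_le_card_nsmul _ _ _ hterm
      _ = (P.card : ℝ) * (C^s * ν y) := by simp [nsmul_eq_mul]
      _ ≤ (2^s : ℝ) * (C^s * ν y) := by
          have h0 : (0:ℝ) ≤ C^s * ν y := mul_nonneg (pow_nonneg hC0 _) (hν0 y)
          have : (P.card : ℝ) ≤ (2^s : ℝ) := by exact_mod_cast hcardP
          exact mul_le_mul_of_nonneg_right this h0
      _ = (2*C)^s * ν y := by rw [mul_pow, mul_assoc]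
  -- main chain
  have main : t * ∑ x ∈ 𝓔, ν x ≤ (2*C)^s * ∑ y ∈ 𝓕, ν y := by
    have step1 : t * ∑ x ∈ 𝓔, ν x ≤ ∑ x ∈ 𝓔, ((Ψ x).card : ℝ) * ν x := by
      rw [Finset.mul_sum]
      exact Finset.sum_le_sum fun x hx => mul_le_mul_of_nonneg_right (h2 x hx) (hν0 x)
    have step2 : ∑ x ∈ 𝓔, ((Ψ x).card : ℝ) * ν x
        = ∑ y ∈ 𝓕, ∑ x ∈ 𝓔.filter (fun x => y ∈ Ψ x), ν x := by
      have : ∀ x ∈ 𝓔, ((Ψ x).card : ℝ) * ν x = ∑ y ∈ 𝓕, if y ∈ Ψ x then ν x else 0 := by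
        intro x hx
        rw [← Finset.sum_filter]
        have : 𝓕.filter (fun y => y ∈ Ψ x) = Ψ x := by
          ext z
          simp only [mem_filter]
          exact ⟨fun h => h.2, fun h => ⟨hΨ𝓕 x hx h, h⟩⟩
        rw [this, Finset.sum_const, nsmul_eq_mul]
      rw [Finset.sum_congr rfl this, Finset.sum_comm]
      exact Finset.sum_congr rfl fun y _ => (Finset.sum_filter _ _).symm
    calc t * ∑ x ∈ 𝓔, ν x ≤ ∑ x ∈ 𝓔, ((Ψ x).card : ℝ) * ν x := step1
      _ = ∑ y ∈ 𝓕, ∑ x ∈ 𝓔.filter (fun x => y ∈ Ψ x), ν x := step2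
      _ ≤ ∑ y ∈ 𝓕, (2*C)^s * ν y := Finset.sum_le_sum key
      _ = (2*C)^s * ∑ y ∈ 𝓕, ν y := (Finset.mul_sum _ _ _).symm
  have h : ∑ x ∈ 𝓔, ν x ≤ ((2*C)^s * ∑ y ∈ 𝓕, ν y) / t := by
    rw [le_div_iff₀ ht, mul_comm]; exact main
  calc ∑ x ∈ 𝓔, ν x ≤ ((2*C)^s * ∑ y ∈ 𝓕, ν y) / t := h
    _ = (1/t) * (2*C)^s * ∑ y ∈ 𝓕, ν y := by ring
end

section
/- Let $k \geq 0$ be an integer and consider a uniformly random total ordering of a finite set $F$ of at least $k+2$ elements. Fix distinct elements $e, f, e_1, \ldots, e_k \in F$ with $f \notin \{e_1, \ldots, e_k\}$. Conditionally on the event that $e$ precedes each of $e_1, \ldots, e_k$, the probability that $e$ precedes $f$ equals $\frac{k+1}{k+2}$. -/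
open Finset

lemma count_min_aux {F : Type*} [Fintype F] [DecidableEq F] (e : F) (S : Finset F)
    (he : e ∉ S) :
    (S.card + 1) * (univ.filter (fun σ : F ≃ Fin (Fintype.card F) =>
        ∀ x ∈ S, σ e < σ x)).card = Nat.factorial (Fintype.card F) := by
  classical
  set n := Fintype.card F with hn
  set T : Finset F := insert e S with hT
  have heT : e ∈ T := mem_insert_self e S
  set B : F → Finset (F ≃ Fin n) := fun a => univ.filter (fun σ => ∀ y ∈ T, σ a ≤ σ y)
    with hB
  have hswapT : ∀ a ∈ T, ∀ y ∈ T, Equiv.swap e a y ∈ T := by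
    intro a ha y hy
    rcases eq_or_ne y e with rfl | hye
    · rw [Equiv.swap_apply_left]; exact ha
    rcases eq_or_ne y a with rfl | hya
    · rw [Equiv.swap_apply_right]; exact heT
    · rw [Equiv.swap_apply_of_ne_of_ne hye hya]; exact hy
  have hcardB : ∀ a ∈ T, (B a).card = (B e).card := by
    intro a ha
    apply Finset.card_bij' (fun σ _ => (Equiv.swap e a).trans σ)
      (fun σ _ => (Equiv.swap e a).trans σ)
    · intro σ hσ
      simp only [hB, mem_filter, mem_univ, true_and, Equiv.trans_apply] at hσ ⊢
      intro y hy
      rw [Equiv.swap_apply_left]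
      exact hσ _ (hswapT a ha y hy)
    · intro σ hσ
      simp only [hB, mem_filter, mem_univ, true_and, Equiv.trans_apply] at hσ ⊢
      intro y hy
      rw [Equiv.swap_apply_right]
      exact hσ _ (hswapT a ha y hy)
    · intro σ _
      ext x
      simp [Equiv.swap_apply_self]
    · intro σ _
      ext x
      simp [Equiv.swap_apply_self]
  have hcover : (univ : Finset (F ≃ Fin n)) = T.biUnion B := by
    apply Finset.eq_of_subset_of_card_le ?_ (card_le_card (subset_univ _))
    intro σ _
    obtain ⟨a, ha, hmin⟩ := Finset.exists_min_image T (fun y => σ y) ⟨e, heT⟩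
    exact mem_biUnion.2 ⟨a, ha, by simp only [hB, mem_filter, mem_univ, true_and]; exact hmin⟩
  have hdisj : ∀ a ∈ T, ∀ b ∈ T, a ≠ b → Disjoint (B a) (B b) := by
    intro a ha b hb hab
    rw [Finset.disjoint_left]
    intro σ hσa hσb
    simp only [hB, mem_filter, mem_univ, true_and] at hσa hσb
    have h1 := hσa b hb
    have h2 := hσb a ha
    exact hab (σ.injective (le_antisymm h1 h2))
  have hsum : (univ : Finset (F ≃ Fin n)).card = ∑ a ∈ T, (B a).card := by
    rw [hcover, Finset.card_biUnion hdisj]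
  have huniv : (univ : Finset (F ≃ Fin n)).card = Nat.factorial n := by
    rw [Finset.card_univ, Fintype.card_equiv (Fintype.equivFin F), hn]
  have hBe : B e = univ.filter (fun σ : F ≃ Fin n => ∀ x ∈ S, σ e < σ x) := by
    ext σ
    simp only [hB, mem_filter, mem_univ, true_and]
    constructor
    · intro h x hx
      have hne : e ≠ x := fun hex => he (hex ▸ hx)
      exact lt_of_le_of_ne (h x (mem_insert_of_mem hx))
        (fun hc => hne (σ.injective hc))
    · intro h y hy
      rcases mem_insert.1 hy with rfl | hyS
      · exact le_refl _
      · exact le_of_lt (h y hyS)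
  calc (S.card + 1) * (univ.filter (fun σ : F ≃ Fin n => ∀ x ∈ S, σ e < σ x)).card
      = T.card * (B e).card := by rw [hBe, hT, card_insert_of_notMem he]
    _ = ∑ a ∈ T, (B e).card := by rw [Finset.sum_const, smul_eq_mul]
    _ = ∑ a ∈ T, (B a).card := Finset.sum_congr rfl (fun a ha => (hcardB a ha).symm)
    _ = Nat.factorial n := by rw [← hsum, huniv]

/-- Under a uniformly random total ordering of a finite set `F` (encoded as a
uniformly random bijection `σ : F ≃ Fin |F|`, with `x` preceding `y` iff
`σ x < σ y`), conditionally on `e` preceding each of `k` fixed elements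
`e₁, …, e_k` (distinct from `e` and `f`), the probability that `e` precedes `f`
equals `(k+1)/(k+2)`. -/
theorem stmt_14 {F : Type*} [Fintype F] [DecidableEq F]
    (e f : F) (es : Finset F) (k : ℕ)
    (hk : es.card = k) (hef : e ≠ f) (he : e ∉ es) (hf : f ∉ es)
    (hcard : k + 2 ≤ Fintype.card F) :
    ((univ.filter (fun σ : F ≃ Fin (Fintype.card F) =>
        (σ e < σ f ∧ ∀ x ∈ es, σ e < σ x))).card : ℝ)
      / ((univ.filter (fun σ : F ≃ Fin (Fintype.card F) =>
        ∀ x ∈ es, σ e < σ x)).card : ℝ)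
      = (k + 1) / (k + 2) := by
  classical
  have he' : e ∉ insert f es := by
    simp only [mem_insert, not_or]; exact ⟨hef, he⟩
  have hnum := count_min_aux e (insert f es) he'
  have hden := count_min_aux e es he
  rw [card_insert_of_notMem hf, hk] at hnum
  rw [hk] at hden
  have hfilter_eq : (univ.filter (fun σ : F ≃ Fin (Fintype.card F) =>
        (σ e < σ f ∧ ∀ x ∈ es, σ e < σ x)))
      = (univ.filter (fun σ : F ≃ Fin (Fintype.card F) =>
        ∀ x ∈ insert f es, σ e < σ x)) := by
    apply filter_congr
    intro σ _
    simp [forall_mem_insert]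
  rw [hfilter_eq]
  set num := (univ.filter (fun σ : F ≃ Fin (Fintype.card F) =>
        ∀ x ∈ insert f es, σ e < σ x)).card with hnumdef
  set den := (univ.filter (fun σ : F ≃ Fin (Fintype.card F) =>
        ∀ x ∈ es, σ e < σ x)).card with hdendef
  have hfac : 0 < Nat.factorial (Fintype.card F) := Nat.factorial_pos _
  have hden0 : 0 < den := by
    by_contra h
    push_neg at h
    interval_cases den
    omega
  have key : (k + 1 + 1) * num = (k + 1) * den := hnum.trans hden.symm
  have hdenR : (den : ℝ) ≠ 0 := Nat.cast_ne_zero.2 hden0.ne'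
  rw [div_eq_div_iff hdenR (by positivity)]
  have := congrArg (fun m : ℕ => (m : ℝ)) key
  push_cast at this ⊢
  linarith
end
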